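/- Let $p$ be an odd prime, $r$ a positive integer, and $u$, $v$ positive integers. Let $c$ be a positive integer not divisible by $p$, and let $a$ and $b$ be positive integers coprime to $c$. Then the rational number $\sum 1/(ij)$, summed over all pairs of integers $(i,j)$ with $1 \le i \le u c p^r$, $1 \le j \le v c p^r$, $a i \equiv b j \pmod c$, and $\gcd(ij,p)=1$, is congruent to $0$ modulo $p^{2r}$. -/

import Mathlib

open Finset

/-- Block-wise CRT twist map. -/
def mySigma (κ m i : ℕ) : ℕ :=
  (i-1)/m * m + (if (κ*i) % m = 0 then m else (κ*i) % m)

theorem mySigma_mod (κ m i : ℕ) (hm : 0 < m) : mySigma κ m i % m = (κ*i) % m := by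
  unfold mySigma
  split
  · simp [Nat.add_mod, Nat.mul_mod_left, *]
  · rw [Nat.add_comm, Nat.add_mul_mod_self_right, Nat.mod_eq_of_lt (Nat.mod_lt _ hm)]

theorem mySigma_modEq (κ m i : ℕ) (hm : 0 < m) : mySigma κ m i ≡ κ * i [MOD m] :=
  mySigma_mod κ m i hm

theorem mySigma_lb (κ m i : ℕ) (hm : 0 < m) : (i-1)/m * m + 1 ≤ mySigma κ m i := by
  unfold mySigma; split <;> omega

theorem mySigma_ub (κ m i : ℕ) (hm : 0 < m) : mySigma κ m i ≤ (i-1)/m * m + m := by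
  unfold mySigma
  have := Nat.mod_lt (κ*i) hm
  split <;> omega

theorem mySigma_pos (κ m i : ℕ) (hm : 0 < m) : 1 ≤ mySigma κ m i := by
  have := mySigma_lb κ m i hm; omega

theorem mySigma_invol (κ m i : ℕ) (hm : 0 < m) (hi : 1 ≤ i)
    (hκ2 : κ * κ ≡ 1 [MOD m]) : mySigma κ m (mySigma κ m i) = i := by
  have h1 := mySigma_lb κ m i hm
  have h2 := mySigma_ub κ m i hm
  have hq : (mySigma κ m i - 1) / m = (i-1)/m := by
    have hlo : (i-1)/m * m ≤ mySigma κ m i - 1 := by omega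
    have hhi : mySigma κ m i - 1 < ((i-1)/m + 1) * m := by
      rw [Nat.add_mul, Nat.one_mul]; omega
    exact Nat.div_eq_of_lt_le hlo hhi
  have hmod : (κ * mySigma κ m i) % m = i % m := by
    have e1 : κ * mySigma κ m i ≡ κ * (κ * i) [MOD m] :=
      (mySigma_modEq κ m i hm).mul_left κ
    have e2 : κ * (κ * i) ≡ 1 * i [MOD m] := by
      rw [← Nat.mul_assoc]; exact hκ2.mul_right i
    have := e1.trans e2
    rwa [Nat.one_mul] at this
  have hdm := Nat.div_add_mod' (i-1) m
  set q := (i-1)/m with hqdef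
  set t := (i-1) % m with htdef
  have ht : t < m := Nat.mod_lt _ hm
  have hieq : i = q * m + t + 1 := by omega
  have himod : i % m = (t+1) % m := by
    rw [hieq, Nat.add_comm (q*m) t, Nat.add_right_comm, Nat.add_mul_mod_self_right]
  conv_lhs => rw [mySigma]
  rw [hq, hmod, himod]
  rcases Nat.lt_or_ge (t+1) m with h | h
  · rw [Nat.mod_eq_of_lt h]
    have hne : ¬ (t+1) = 0 := by omega
    simp only [hne, if_false]
    omega
  · have htm : t + 1 = m := by omega
    rw [htm]
    simp only [Nat.mod_self, if_true]
    omega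

theorem mySigma_mem_Icc (κ m i u : ℕ) (hm : 0 < m) (hu : 0 < u)
    (hi : i ∈ Finset.Icc 1 (u*m)) :
    mySigma κ m i ∈ Finset.Icc 1 (u*m) := by
  simp only [Finset.mem_Icc] at *
  have h1 := mySigma_lb κ m i hm
  have h2 := mySigma_ub κ m i hm
  refine ⟨by omega, ?_⟩
  have hqlt : (i-1)/m < u := Nat.div_lt_of_lt_mul (by rw [Nat.mul_comm]; omega)
  calc mySigma κ m i ≤ (i-1)/m * m + m := h2
    _ ≤ (u-1)*m + m := by
        have hle : (i-1)/m ≤ u-1 := by omega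
        exact Nat.add_le_add_right (Nat.mul_le_mul_right (k := m) hle) m
    _ = u*m := by
        obtain ⟨w, rfl⟩ : ∃ w, u = w + 1 := ⟨u - 1, by omega⟩
        simp [Nat.add_mul]

/-- **Lemma 2.2.** For an odd prime `p`, `r, u, v ≥ 1`, a positive integer `c` with
`p ∤ c`, and positive integers `a, b` coprime to `c`, the sum `∑ 1/(ij)` over
`1 ≤ i ≤ u c p^r`, `1 ≤ j ≤ v c p^r` with `a i ≡ b j (mod c)` and `gcd(ij, p) = 1`
is congruent to `0` mod `p ^ (2r)`. -/
theorem double_harmonic_vanishes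
    (p r u v c a b : ℕ)
    (hp : p.Prime) (hpodd : Odd p) (hr : 0 < r) (hu : 0 < u) (hv : 0 < v)
    (hc : 0 < c) (hpc : ¬ p ∣ c)
    (ha : 0 < a) (hb : 0 < b)
    (hac : Nat.Coprime a c) (hbc : Nat.Coprime b c) :
    (p : ℤ) ^ (2 * r) ∣
      ((∑ t ∈ ((Finset.Icc 1 (u * c * p ^ r) ×ˢ Finset.Icc 1 (v * c * p ^ r)).filter
          (fun t : ℕ × ℕ => (a * t.1) % c = (b * t.2) % c ∧ Nat.Coprime (t.1 * t.2) p)),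
        (1 : ℚ) / ((t.1 * t.2 : ℕ) : ℚ))).num := by
  have hp2 : p ≠ 2 := by rintro rfl; exact (by decide : ¬ Odd 2) hpodd
  have hp3 : 3 ≤ p := by
    have := hp.two_le; omega
  set m := c * p ^ r with hmdef
  have hppos : 0 < p ^ r := pow_pos hp.pos r
  have hm : 0 < m := Nat.mul_pos hc hppos
  have hcp : Nat.Coprime c p := (hp.coprime_iff_not_dvd.mpr hpc).symm
  have hcop : Nat.Coprime c (p ^ r) := hcp.pow_right r
  obtain ⟨κ, hκc, hκp⟩ := Nat.chineseRemainder hcop 1 (p ^ r - 1)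
  have hprm : p ^ r ∣ m := ⟨c, Nat.mul_comm c _⟩
  have hcm : c ∣ m := ⟨p ^ r, rfl⟩
  have hpm : p ∣ m := (dvd_pow_self p hr.ne').trans hprm
  have hκ1 : p ^ r ∣ κ + 1 := by
    have h1 : κ + 1 ≡ (p ^ r - 1) + 1 [MOD p ^ r] := hκp.add_right 1
    rw [Nat.sub_add_cancel hppos] at h1
    have h2 : κ + 1 ≡ 0 [MOD p ^ r] := h1.trans (Nat.modEq_zero_iff_dvd.mpr dvd_rfl)
    exact (Nat.modEq_zero_iff_dvd).mp h2
  have hκnd : ¬ p ∣ κ := by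
    intro h
    have h1 : p ∣ κ + 1 := (dvd_pow_self p hr.ne').trans hκ1
    have h2 : p ∣ κ + 1 - κ := Nat.dvd_sub h1 h
    have h3 : κ + 1 - κ = 1 := by omega
    rw [h3] at h2
    have := Nat.le_of_dvd Nat.one_pos h2
    omega
  have hκ2 : κ * κ ≡ 1 [MOD m] := by
    rw [hmdef]
    refine (Nat.modEq_and_modEq_iff_modEq_mul hcop).mp ⟨?_, ?_⟩
    · exact hκc.mul hκc
    · have e1 : κ * κ ≡ (p ^ r - 1) * (p ^ r - 1) [MOD p ^ r] := hκp.mul hκp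
      have e2 : (p ^ r - 1) * (p ^ r - 1) ≡ 1 [MOD p ^ r] := by
        have h3 : 3 ≤ p ^ r := le_trans hp3 (Nat.le_self_pow hr.ne' p)
        obtain ⟨x, hx⟩ : ∃ x, p ^ r = x + 2 := ⟨p ^ r - 2, by omega⟩
        rw [hx]
        show ((x + 2 - 1) * (x + 2 - 1)) % (x+2) = 1 % (x+2)
        have h21 : x + 2 - 1 = x + 1 := by omega
        have hid : (x + 1) * (x + 1) = 1 + x * (x + 2) := by ring
        rw [h21, hid, Nat.add_mul_mod_self_right]
      exact e1.trans e2
  -- the twist map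
  set σ : ℕ → ℕ := mySigma κ m with hσdef
  have hσmodEq : ∀ i, σ i ≡ κ * i [MOD m] := fun i => mySigma_modEq κ m i hm
  have hσc : ∀ i, σ i ≡ i [MOD c] := by
    intro i
    have h1 : σ i ≡ κ * i [MOD c] := (hσmodEq i).of_dvd hcm
    have h2 : κ * i ≡ 1 * i [MOD c] := hκc.mul_right i
    simpa using h1.trans h2
  have hσdvd : ∀ i, (p ∣ σ i ↔ p ∣ i) := by
    intro i
    have h1 : σ i ≡ κ * i [MOD p] := (hσmodEq i).of_dvd hpm
    have h2 : p ∣ σ i ↔ p ∣ κ * i := by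
      constructor
      · intro h; exact (Nat.modEq_zero_iff_dvd).mp ((h1.symm).trans (Nat.modEq_zero_iff_dvd.mpr h))
      · intro h; exact (Nat.modEq_zero_iff_dvd).mp (h1.trans (Nat.modEq_zero_iff_dvd.mpr h))
    rw [h2, hp.dvd_mul]
    simp [hκnd]
  have hσpr : ∀ i, p ^ r ∣ (i + σ i) := by
    intro i
    have h1 : σ i ≡ κ * i [MOD p ^ r] := (hσmodEq i).of_dvd hprm
    have h2 : i + σ i ≡ i + κ * i [MOD p ^ r] := h1.add_left i
    have h3 : i + κ * i = (κ + 1) * i := by ring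
    have h4 : p ^ r ∣ i + κ * i := by rw [h3]; exact Dvd.dvd.mul_right hκ1 i
    have h5 : i + σ i ≡ 0 [MOD p ^ r] := h2.trans (Nat.modEq_zero_iff_dvd.mpr h4)
    exact Nat.modEq_zero_iff_dvd.mp h5
  set T := ((Finset.Icc 1 (u * c * p ^ r) ×ˢ Finset.Icc 1 (v * c * p ^ r)).filter
      (fun t : ℕ × ℕ => (a * t.1) % c = (b * t.2) % c ∧ Nat.Coprime (t.1 * t.2) p)) with hTdef
  have hbound1 : u * c * p ^ r = u * m := by rw [hmdef, Nat.mul_assoc]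
  have hbound2 : v * c * p ^ r = v * m := by rw [hmdef, Nat.mul_assoc]
  have hcopiff : ∀ x, Nat.Coprime x p ↔ ¬ p ∣ x := fun x =>
    Nat.coprime_comm.trans (hp.coprime_iff_not_dvd)
  have hmemT : ∀ t : ℕ × ℕ, t ∈ T ↔
      (t.1 ∈ Finset.Icc 1 (u * m) ∧ t.2 ∈ Finset.Icc 1 (v * m) ∧
        (a * t.1) % c = (b * t.2) % c ∧ (¬ p ∣ t.1 ∧ ¬ p ∣ t.2)) := by
    intro t
    rw [hTdef, Finset.mem_filter, Finset.mem_product, hbound1, hbound2]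
    have : Nat.Coprime (t.1 * t.2) p ↔ (¬ p ∣ t.1 ∧ ¬ p ∣ t.2) := by
      rw [Nat.coprime_mul_iff_left, hcopiff, hcopiff]
    tauto
  have hT1 : ∀ t ∈ T, (σ t.1, t.2) ∈ T := by
    intro t ht
    rw [hmemT] at *
    obtain ⟨h1, h2, h3, h4, h5⟩ := ht
    refine ⟨mySigma_mem_Icc κ m t.1 u hm hu h1, h2, ?_, ?_, h5⟩
    · have : a * σ t.1 ≡ a * t.1 [MOD c] := (hσc t.1).mul_left a
      rw [this]; exact h3
    · rw [hσdvd]; exact h4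
  have hT2 : ∀ t ∈ T, (t.1, σ t.2) ∈ T := by
    intro t ht
    rw [hmemT] at *
    obtain ⟨h1, h2, h3, h4, h5⟩ := ht
    refine ⟨h1, mySigma_mem_Icc κ m t.2 v hm hv h2, ?_, h4, ?_⟩
    · have : b * σ t.2 ≡ b * t.2 [MOD c] := (hσc t.2).mul_left b
      rw [this]; exact h3
    · rw [hσdvd]; exact h5
  have hpos1 : ∀ t ∈ T, 1 ≤ t.1 := by
    intro t ht; rw [hmemT] at ht; exact (Finset.mem_Icc.mp ht.1).1
  have hpos2 : ∀ t ∈ T, 1 ≤ t.2 := by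
    intro t ht; rw [hmemT] at ht; exact (Finset.mem_Icc.mp ht.2.1).1
  have hinv : ∀ i, 1 ≤ i → σ (σ i) = i := fun i hi => mySigma_invol κ m i hm hi hκ2
  -- reindexing
  have hre1 : ∀ F : ℕ × ℕ → ℚ, ∑ t ∈ T, F (σ t.1, t.2) = ∑ t ∈ T, F t := by
    intro F
    refine Finset.sum_nbij' (i := fun t => (σ t.1, t.2)) (j := fun t => (σ t.1, t.2))
      hT1 hT1 ?_ ?_ ?_
    · intro t ht; simp [hinv t.1 (hpos1 t ht)]
    · intro t ht; simp [hinv t.1 (hpos1 t ht)]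
    · intro t ht; rfl
  have hre2 : ∀ F : ℕ × ℕ → ℚ, ∑ t ∈ T, F (t.1, σ t.2) = ∑ t ∈ T, F t := by
    intro F
    refine Finset.sum_nbij' (i := fun t => (t.1, σ t.2)) (j := fun t => (t.1, σ t.2))
      hT2 hT2 ?_ ?_ ?_
    · intro t ht; simp [hinv t.2 (hpos2 t ht)]
    · intro t ht; simp [hinv t.2 (hpos2 t ht)]
    · intro t ht; rfl
  set F : ℕ × ℕ → ℚ := fun t => (1 : ℚ) / ((t.1 * t.2 : ℕ) : ℚ) with hFdef
  set S : ℚ := ∑ t ∈ T, F t with hSdef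
  have h4S : ∑ t ∈ T, (F t + F (σ t.1, t.2) + F (t.1, σ t.2) + F (σ t.1, σ t.2)) = 4 * S := by
    rw [Finset.sum_add_distrib, Finset.sum_add_distrib, Finset.sum_add_distrib]
    rw [hre1 F, hre2 F]
    have : ∑ t ∈ T, F (σ t.1, σ t.2) = ∑ t ∈ T, F t := by
      have := hre2 (fun t => F (σ t.1, t.2))
      simp only at this
      rw [this, hre1 F]
    rw [this, ← hSdef]
    ring
  -- the local divisibility predicate
  set P : ℚ → Prop := fun x => ∃ z d : ℤ, ¬ (p:ℤ) ∣ d ∧ x * (d:ℚ) = ((p:ℤ)^(2*r) * z : ℤ) with hPdef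
  have hP0 : P 0 := by
    refine ⟨0, 1, ?_, by push_cast; ring⟩
    intro hdvd
    have h1 := Int.isUnit_iff.mp (isUnit_of_dvd_one hdvd)
    have := hp.two_le
    omega
  have hPadd : ∀ x y, P x → P y → P (x + y) := by
    rintro x y ⟨z1, d1, hd1, he1⟩ ⟨z2, d2, hd2, he2⟩
    refine ⟨z1 * d2 + z2 * d1, d1 * d2, ?_, ?_⟩
    · intro h
      rcases (Int.Prime.dvd_mul' hp h) with h | h
      · exact hd1 h
      · exact hd2 h
    · push_cast at he1 he2 ⊢
      linear_combination (d2 : ℚ) * he1 + (d1 : ℚ) * he2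
  have hPterm : ∀ t ∈ T, P (F t + F (σ t.1, t.2) + F (t.1, σ t.2) + F (σ t.1, σ t.2)) := by
    intro t ht
    obtain ⟨hi1, hi2, _, hnd1, hnd2⟩ := (hmemT t).mp ht
    have hi1' : 1 ≤ t.1 := (Finset.mem_Icc.mp hi1).1
    have hi2' : 1 ≤ t.2 := (Finset.mem_Icc.mp hi2).1
    have hσ1 : 1 ≤ σ t.1 := mySigma_pos κ m t.1 hm
    have hσ2 : 1 ≤ σ t.2 := mySigma_pos κ m t.2 hm
    have hndσ1 : ¬ p ∣ σ t.1 := by rw [hσdvd]; exact hnd1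
    have hndσ2 : ¬ p ∣ σ t.2 := by rw [hσdvd]; exact hnd2
    obtain ⟨A, hA⟩ := hσpr t.1
    obtain ⟨B, hB⟩ := hσpr t.2
    refine ⟨(A : ℤ) * B, ((t.1 * σ t.1 * t.2 * σ t.2 : ℕ) : ℤ), ?_, ?_⟩
    · rw [Int.natCast_dvd_natCast]
      intro h
      rcases (Nat.Prime.dvd_mul hp).mp h with h | h
      · rcases (Nat.Prime.dvd_mul hp).mp h with h | h
        · rcases (Nat.Prime.dvd_mul hp).mp h with h | h
          · exact hnd1 h
          · exact hndσ1 h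
        · exact hnd2 h
      · exact hndσ2 h
    · have c1 : ((t.1 : ℚ)) ≠ 0 := Nat.cast_ne_zero.mpr (by omega)
      have c2 : ((σ t.1 : ℚ)) ≠ 0 := Nat.cast_ne_zero.mpr (by omega)
      have c3 : ((t.2 : ℚ)) ≠ 0 := Nat.cast_ne_zero.mpr (by omega)
      have c4 : ((σ t.2 : ℚ)) ≠ 0 := Nat.cast_ne_zero.mpr (by omega)
      have hA' : (t.1 : ℚ) + (σ t.1 : ℚ) = (p : ℚ)^r * (A : ℚ) := by exact_mod_cast hA
      have hB' : (t.2 : ℚ) + (σ t.2 : ℚ) = (p : ℚ)^r * (B : ℚ) := by exact_mod_cast hB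
      have key : F t + F (σ t.1, t.2) + F (t.1, σ t.2) + F (σ t.1, σ t.2)
          = (((t.1:ℚ) + σ t.1) * ((t.2:ℚ) + σ t.2)) / ((t.1:ℚ) * σ t.1 * (t.2:ℚ) * σ t.2) := by
        simp only [hFdef]
        push_cast
        field_simp
        ring
      rw [key]
      push_cast
      rw [div_mul_cancel₀]
      · rw [hA', hB']
        ring
      · intro hzero
        rcases mul_eq_zero.mp hzero with h | h
        · rcases mul_eq_zero.mp h with h | h
          · rcases mul_eq_zero.mp h with h | h
            · exact c1 h
            · exact c2 h
          · exact c3 h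
        · exact c4 h
  -- conclude
  have hPsum : P (4 * S) := by
    rw [← h4S]
    exact Finset.sum_induction _ P hPadd hP0 hPterm
  obtain ⟨z, d, hd, heq⟩ := hPsum
  have hpZ : Prime ((p:ℕ) : ℤ) := Nat.prime_iff_prime_int.mp hp
  have hdennz : ((S.den : ℚ)) ≠ 0 := Nat.cast_ne_zero.mpr S.den_ne_zero
  have hnum : (S.num : ℚ) = S * (S.den : ℚ) := by
    have h := Rat.num_div_den S
    rw [div_eq_iff hdennz] at h
    exact h
  have heq2 : (S.num : ℚ) * (4 * (d:ℚ)) = (((p:ℤ)^(2*r) * (z * S.den) : ℤ) : ℚ) := by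
    push_cast at heq ⊢
    calc (S.num:ℚ) * (4*(d:ℚ)) = (4 * S * (d:ℚ)) * (S.den:ℚ) := by rw [hnum]; ring
    _ = ((p:ℚ)^(2*r) * (z:ℚ)) * (S.den:ℚ) := by rw [heq]
    _ = _ := by ring
  have heqZ : S.num * (4 * d) = (p:ℤ)^(2*r) * (z * S.den) := by exact_mod_cast heq2
  have hdvd : (p:ℤ)^(2*r) ∣ S.num * (4*d) := ⟨z * S.den, heqZ⟩
  have hnd4 : ¬ ((p:ℕ):ℤ) ∣ (4*d) := by
    intro h
    rcases Int.Prime.dvd_mul' hp h with h | h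
    · have h4 : (p:ℕ) ∣ 4 := by exact_mod_cast h
      have h4' : p ∣ 2^2 := by norm_num; exact h4
      have := Nat.le_of_dvd (by norm_num) (hp.dvd_of_dvd_pow h4')
      omega
    · exact hd h
  exact hpZ.pow_dvd_of_dvd_mul_right _ hnd4 hdvd
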